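/- Let F be a cumulative distribution function that is differentiable at k with F(k) = a ∈ (0,1) and F'(k) = b > 0, suppose ln F is concave on {x : F(x) > 0}, and let x ∈ (0, 1 − a). Then (1/x)·∫_a^{a+x} Q(u) du ≥ k + g(a, b, x), where Q is the quantile function of F. -/

import Mathlib

open Set

/-- A cumulative distribution function: monotone, right-continuous, with limits
0 at `-∞` and 1 at `+∞`. -/
def IsCDF (F : ℝ → ℝ) : Prop :=
  Monotone F ∧ (∀ x, ContinuousWithinAt F (Set.Ici x) x) ∧
    Filter.Tendsto F Filter.atBot (nhds 0) ∧ Filter.Tendsto F Filter.atTop (nhds 1)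

/-- The quantile function of a CDF: `Q(u) = inf {x | F x ≥ u}`. -/
noncomputable def quantile (F : ℝ → ℝ) (u : ℝ) : ℝ := sInf {x | u ≤ F x}

/-- The function `g(a,b,x) = (a/(b·x))·(a+x)·ln(1 + x/a) - a/b` from the
paper's Theorem 1. -/
noncomputable def g (a b x : ℝ) : ℝ :=
  a / (b * x) * (a + x) * Real.log (1 + x / a) - a / b

lemma quantile_mono_aux (F : ℝ → ℝ) (hcdf : IsCDF F) {u v : ℝ}
    (hu : 0 < u) (huv : u ≤ v) (hv : v < 1) :
    quantile F u ≤ quantile F v := by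
  obtain ⟨-, -, hbot, htop⟩ := hcdf
  obtain ⟨y, hy⟩ := (htop.eventually (eventually_ge_nhds hv)).exists
  obtain ⟨M, hM⟩ := Filter.eventually_atBot.1 (hbot.eventually (eventually_lt_nhds hu))
  refine csInf_le_csInf ⟨M, fun z hz => ?_⟩ ⟨y, hy⟩ (fun z hz => huv.trans hz)
  by_contra h
  exact absurd hz (not_le.2 (hM z (le_of_not_ge h)))

lemma quantile_lb (F : ℝ → ℝ) (hcdf : IsCDF F) (k a b : ℝ)
    (ha : a ∈ Set.Ioo (0 : ℝ) 1) (hb : 0 < b) (hFk : F k = a)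
    (hderiv : HasDerivAt F b k)
    (hlc : ConcaveOn ℝ {x | 0 < F x} (fun x => Real.log (F x)))
    {u : ℝ} (hu : a ≤ u) (hu1 : u < 1) :
    k + (a / b) * (Real.log u - Real.log a) ≤ quantile F u := by
  have ha0 : (0:ℝ) < a := ha.1
  have hu0 : 0 < u := lt_of_lt_of_le ha0 hu
  have hkS : k ∈ {x | 0 < F x} := by simp only [Set.mem_setOf_eq, hFk]; exact ha0
  have hlog : HasDerivAt (fun z => Real.log (F z)) (b / a) k := by
    have := hderiv.log (by rw [hFk]; exact ha0.ne')
    simpa [hFk] using this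
  obtain ⟨y0, hy0⟩ := ((hcdf.2.2.2).eventually (eventually_ge_nhds hu1)).exists
  refine le_csInf ⟨y0, hy0⟩ (fun z hz => ?_)
  have hFz : 0 < F z := lt_of_lt_of_le hu0 hz
  have hzS : z ∈ {x | 0 < F x} := hFz
  have hfk : Real.log (F k) = Real.log a := by rw [hFk]
  have htan : Real.log (F z) ≤ Real.log a + (b / a) * (z - k) := by
    rcases lt_trichotomy z k with h | h | h
    · have h1 := hlc.le_slope_of_hasDerivAt hzS hkS h hlog
      rw [slope_def_field] at h1
      have hk0 : 0 < k - z := by linarith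
      rw [div_le_div_iff₀ ha0 hk0, hfk] at h1
      have h2 : Real.log (F z) - Real.log a ≤ b / a * (z - k) := by
        rw [div_mul_eq_mul_div, le_div_iff₀ ha0]; nlinarith [h1]
      linarith
    · subst h; rw [hfk]; linarith
    · have h1 := hlc.slope_le_of_hasDerivAt hkS hzS h hlog
      rw [slope_def_field] at h1
      have hk0 : 0 < z - k := by linarith
      rw [div_le_div_iff₀ hk0 ha0, hfk] at h1
      have h2 : Real.log (F z) - Real.log a ≤ b / a * (z - k) := by
        rw [div_mul_eq_mul_div, le_div_iff₀ ha0]; nlinarith [h1]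
      linarith
  have hlu : Real.log u ≤ Real.log (F z) := Real.log_le_log hu0 hz
  have ht : Real.log u - Real.log a ≤ (b / a) * (z - k) := by linarith
  have h2 : (a / b) * (Real.log u - Real.log a) ≤ (a / b) * ((b / a) * (z - k)) :=
    mul_le_mul_of_nonneg_left ht (div_pos ha0 hb).le
  have h3 : (a / b) * ((b / a) * (z - k)) = z - k := by
    field_simp
  linarith

theorem stmt7 (F : ℝ → ℝ) (hcdf : IsCDF F) (k a b : ℝ)
    (ha : a ∈ Set.Ioo (0 : ℝ) 1) (hb : 0 < b)
    (hFk : F k = a) (hderiv : HasDerivAt F b k)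
    (hlc : ConcaveOn ℝ {x | 0 < F x} (fun x => Real.log (F x)))
    (x : ℝ) (hx : x ∈ Set.Ioo 0 (1 - a)) :
    k + g a b x ≤ (1 / x) * ∫ u in a..(a + x), quantile F u := by
  obtain ⟨hx0, hx1⟩ := hx
  have ha0 : (0:ℝ) < a := ha.1
  have hax : a + x < 1 := by linarith
  have haax : a ≤ a + x := by linarith
  set φ : ℝ → ℝ := fun u => k + (a / b) * (Real.log u - Real.log a) with hφ
  have hint_q : IntervalIntegrable (quantile F) MeasureTheory.volume a (a + x) := by
    apply MonotoneOn.intervalIntegrable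
    intro u hu v hv huv
    rw [uIcc_of_le haax] at hu hv
    exact quantile_mono_aux F hcdf (lt_of_lt_of_le ha0 hu.1) huv (lt_of_le_of_lt hv.2 hax)
  have hcont : ContinuousOn φ (uIcc a (a + x)) := by
    rw [uIcc_of_le haax]
    refine continuousOn_const.add (continuousOn_const.mul ((ContinuousOn.mono Real.continuousOn_log ?_).sub continuousOn_const))
    intro u hu
    exact (ne_of_gt (lt_of_lt_of_le ha0 hu.1))
  have hint_φ : IntervalIntegrable φ MeasureTheory.volume a (a + x) :=
    hcont.intervalIntegrable
  have hmono : ∀ u ∈ Icc a (a + x), φ u ≤ quantile F u := fun u hu =>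
    quantile_lb F hcdf k a b ha hb hFk hderiv hlc hu.1 (lt_of_le_of_lt hu.2 hax)
  have hle : (∫ u in a..(a + x), φ u) ≤ ∫ u in a..(a + x), quantile F u :=
    intervalIntegral.integral_mono_on haax hint_φ hint_q hmono
  -- compute the integral of φ via an antiderivative
  set H : ℝ → ℝ := fun u => k * u + (a / b) * (u * Real.log u - u - u * Real.log a) with hH
  have hHd : ∀ u ∈ uIcc a (a + x), HasDerivAt H (φ u) u := by
    intro u hu
    rw [uIcc_of_le haax] at hu
    have hu0 : 0 < u := lt_of_lt_of_le ha0 hu.1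
    have h1 : HasDerivAt (fun u : ℝ => u * Real.log u) (Real.log u + 1) u := by
      have := (hasDerivAt_id u).mul (Real.hasDerivAt_log hu0.ne')
      exact this.congr_deriv (by simp [hu0.ne'])
    have h2 := ((h1.sub (hasDerivAt_id u)).sub ((hasDerivAt_id u).mul_const (Real.log a))).const_mul (a / b)
    have h3 := ((hasDerivAt_id u).const_mul k).add h2
    exact h3.congr_deriv (by show _ = k + (a / b) * (Real.log u - Real.log a); ring)
  have hval : (∫ u in a..(a + x), φ u) = H (a + x) - H a :=
    intervalIntegral.integral_eq_sub_of_hasDerivAt hHd hint_φ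
  have hkey : k + g a b x = (1 / x) * ∫ u in a..(a + x), φ u := by
    rw [hval, hH]
    have hax0 : (0:ℝ) < a + x := by linarith
    have hlg : Real.log (1 + x / a) = Real.log (a + x) - Real.log a := by
      rw [show (1 : ℝ) + x / a = (a + x) / a by field_simp, Real.log_div hax0.ne' ha0.ne']
    simp only [g, hlg]
    field_simp
    ring
  rw [hkey]
  exact mul_le_mul_of_nonneg_left hle (by positivity)
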